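/- Let P_1,…,P_n and Q_1,…,Q_n be convex polytopes in ℝ^n with P_i ⊆ Q_i for every i. For a nonzero vector u ∈ ℝ^n define B_{i,u} = { x ∈ Q_i : ⟨u,x⟩ ≥ h_{P_i}(u) }, and for u ∈ S^{n−1} let T_u = { i : P_i ∩ Q_i^u ≠ ∅ }. Then there exists a nonzero u ∈ ℝ^n such that {B_{1,u},…,B_{n,u}} is essential if and only if there exists u ∈ S^{n−1} such that the collection consisting of Q_i^u for i ∈ T_u together with Q_i for i ∉ T_u is essential. -/

import Mathlib

open Pointwise MeasureTheory RealInnerProductSpace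

attribute [local instance] Classical.propDecidable

noncomputable section

/-- `ℝ^n` with the standard inner product. -/
abbrev E (n : ℕ) : Type := EuclideanSpace ℝ (Fin n)

/-- A convex polytope: the convex hull of a nonempty finite set of points. -/
def IsPolytope {n : ℕ} (P : Set (E n)) : Prop :=
  ∃ S : Finset (E n), S.Nonempty ∧ P = convexHull ℝ (S : Set (E n))

/-- The mixed volume of `n` convex bodies in `ℝ^n`, via inclusion–exclusion. -/
def mixedVolume (n : ℕ) (K : Fin n → Set (E n)) : ℝ :=
  ((n.factorial : ℝ))⁻¹ *
    ∑ I ∈ Finset.univ.powerset.filter (fun I : Finset (Fin n) => I.Nonempty),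
      (-1 : ℝ) ^ (n + I.card) * (volume (∑ i ∈ I, K i)).toReal

/-- The support function of a set `K ⊆ ℝ^n`. -/
def suppFn {n : ℕ} (K : Set (E n)) (u : E n) : ℝ :=
  sSup ((fun x => ⟪u, x⟫) '' K)

/-- The face of `K` in direction `u`. -/
def faceOf {n : ℕ} (K : Set (E n)) (u : E n) : Set (E n) :=
  {x ∈ K | ⟪u, x⟫ = suppFn K u}

/-- The dimension of a convex set: the dimension of its affine hull. -/
def setDim {V : Type*} [AddCommGroup V] [Module ℝ V] (s : Set V) : ℕ :=
  Module.finrank ℝ (affineSpan ℝ s).direction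

/-- A collection of sets in `ℝ^n` is essential if for every nonempty subcollection of
size at most `n` the Minkowski sum has dimension at least the size of the subcollection. -/
def IsEssential {n : ℕ} {ι : Type*} [Fintype ι] (K : ι → Set (E n)) : Prop :=
  ∀ I : Finset ι, I.Nonempty → I.card ≤ n → I.card ≤ setDim (∑ i ∈ I, K i)


section AuxLemmas
variable {n : ℕ}

private lemma polyNonempty {P : Set (E n)} (h : IsPolytope P) : P.Nonempty := by
  obtain ⟨S, hS, rfl⟩ := h
  obtain ⟨x, hx⟩ := hS
  exact ⟨x, subset_convexHull ℝ _ hx⟩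

private lemma polyCompact {P : Set (E n)} (h : IsPolytope P) : IsCompact P := by
  obtain ⟨S, hS, rfl⟩ := h
  exact S.finite_toSet.isCompact_convexHull ℝ

private lemma polyConvex {P : Set (E n)} (h : IsPolytope P) : Convex ℝ P := by
  obtain ⟨S, hS, rfl⟩ := h
  exact convex_convexHull ℝ _

private lemma cont_inner (u : E n) : Continuous fun x : E n => ⟪u, x⟫ :=
  continuous_const.inner continuous_id

private lemma inner_le_suppFn {K : Set (E n)} (h : IsPolytope K) (u : E n) {x : E n}
    (hx : x ∈ K) : ⟪u, x⟫ ≤ suppFn K u :=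
  (isLUB_csSup ((polyNonempty h).image _)
    (((polyCompact h).image (cont_inner u)).bddAbove)).1 ⟨x, hx, rfl⟩

private lemma suppFn_mono {P Q : Set (E n)} (hP : IsPolytope P) (hQ : IsPolytope Q)
    (hPQ : P ⊆ Q) (u : E n) : suppFn P u ≤ suppFn Q u :=
  csSup_le ((polyNonempty hP).image _)
    (fun _ ⟨x, hx, hxe⟩ => hxe ▸ inner_le_suppFn hQ u (hPQ hx))

private lemma exists_face_mem {K : Set (E n)} (h : IsPolytope K) (u : E n) :
    ∃ x, x ∈ faceOf K u := by
  obtain ⟨x, hxK, hmax⟩ :=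
    (polyCompact h).exists_isMaxOn (polyNonempty h) (cont_inner u).continuousOn
  refine ⟨x, hxK, le_antisymm (inner_le_suppFn h u hxK) ?_⟩
  exact csSup_le ((polyNonempty h).image _) (fun _ ⟨y, hy, hye⟩ => hye ▸ hmax hy)

private lemma vectorSpan_add' {A B : Set (E n)} (hA : A.Nonempty) (hB : B.Nonempty) :
    vectorSpan ℝ (A + B) = vectorSpan ℝ A ⊔ vectorSpan ℝ B := by
  refine le_antisymm ?_ (sup_le ?_ ?_)
  · rw [vectorSpan, Submodule.span_le]
    rintro v ⟨x, hx, y, hy, rfl⟩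
    obtain ⟨a, ha, b, hb, rfl⟩ := hx
    obtain ⟨a', ha', b', hb', rfl⟩ := hy
    beta_reduce
    have : (a + b) -ᵥ (a' + b') = (a -ᵥ a') + (b -ᵥ b') := by
      simp [vsub_eq_sub]; abel
    rw [this]
    exact Submodule.add_mem _
      (Submodule.mem_sup_left (vsub_mem_vectorSpan ℝ ha ha'))
      (Submodule.mem_sup_right (vsub_mem_vectorSpan ℝ hb hb'))
  · obtain ⟨b, hb⟩ := hB
    rw [vectorSpan, Submodule.span_le]
    rintro v ⟨a, ha, a', ha', rfl⟩
    beta_reduce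
    have : a -ᵥ a' = (a + b) -ᵥ (a' + b) := by simp [vsub_eq_sub]
    rw [this]
    exact vsub_mem_vectorSpan ℝ (Set.add_mem_add ha hb) (Set.add_mem_add ha' hb)
  · obtain ⟨a, ha⟩ := hA
    rw [vectorSpan, Submodule.span_le]
    rintro v ⟨b, hb, b', hb', rfl⟩
    beta_reduce
    have : b -ᵥ b' = (a + b) -ᵥ (a + b') := by simp [vsub_eq_sub]
    rw [this]
    exact vsub_mem_vectorSpan ℝ (Set.add_mem_add ha hb) (Set.add_mem_add ha hb')

private lemma sum_nonempty' {ι : Type*} (I : Finset ι) (K : ι → Set (E n))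
    (h : ∀ i ∈ I, (K i).Nonempty) : (∑ i ∈ I, K i).Nonempty := by
  classical
  induction I using Finset.induction_on with
  | empty => exact ⟨0, rfl⟩
  | @insert a s hi ih =>
    rw [Finset.sum_insert hi]
    exact (h a (Finset.mem_insert_self a s)).add
      (ih fun i hi' => h i (Finset.mem_insert_of_mem hi'))

private lemma vectorSpan_sum_eq {ι : Type*} (I : Finset ι) (K K' : ι → Set (E n))
    (hK : ∀ i ∈ I, (K i).Nonempty) (hK' : ∀ i ∈ I, (K' i).Nonempty)
    (h : ∀ i ∈ I, vectorSpan ℝ (K i) = vectorSpan ℝ (K' i)) :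
    vectorSpan ℝ (∑ i ∈ I, K i) = vectorSpan ℝ (∑ i ∈ I, K' i) := by
  classical
  induction I using Finset.induction_on with
  | empty => rfl
  | @insert a s hi ih =>
    rw [Finset.sum_insert hi, Finset.sum_insert hi,
      vectorSpan_add' (hK a (by simp)) (sum_nonempty' s K (fun i h' => hK i (by simp [h']))),
      vectorSpan_add' (hK' a (by simp)) (sum_nonempty' s K' (fun i h' => hK' i (by simp [h']))),
      h a (by simp), ih (fun i h' => hK i (by simp [h'])) (fun i h' => hK' i (by simp [h']))
        (fun i h' => h i (by simp [h']))]

private lemma setDim_eq_of_vectorSpan {s t : Set (E n)}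
    (h : vectorSpan ℝ s = vectorSpan ℝ t) : setDim s = setDim t := by
  unfold setDim
  rw [direction_affineSpan, direction_affineSpan, h]

private lemma suppFn_smul {K : Set (E n)} (h : IsPolytope K) (u : E n) {c : ℝ} (hc : 0 < c) :
    suppFn K (c • u) = c * suppFn K u := by
  have hne : ((fun x => ⟪c • u, x⟫) '' K).Nonempty := (polyNonempty h).image _
  refine IsLUB.csSup_eq ⟨?_, ?_⟩ hne
  · rintro _ ⟨x, hx, rfl⟩
    beta_reduce
    rw [real_inner_smul_left]
    exact mul_le_mul_of_nonneg_left (inner_le_suppFn h u hx) hc.le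
  · intro b hb
    have h2 : suppFn K u ≤ b / c := by
      refine csSup_le ((polyNonempty h).image _) ?_
      rintro _ ⟨x, hx, rfl⟩
      have h3 := hb ⟨x, hx, rfl⟩
      beta_reduce at h3
      rw [real_inner_smul_left] at h3
      exact (le_div_iff₀' hc).mpr h3
    calc c * suppFn K u ≤ c * (b / c) := mul_le_mul_of_nonneg_left h2 hc.le
      _ = b := by field_simp

private lemma B_smul {P Q : Set (E n)} (hP : IsPolytope P) (u : E n) {c : ℝ} (hc : 0 < c) :
    {x ∈ Q | suppFn P (c • u) ≤ ⟪c • u, x⟫} = {x ∈ Q | suppFn P u ≤ ⟪u, x⟫} := by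
  ext x
  simp only [Set.mem_setOf_eq, suppFn_smul hP u hc, real_inner_smul_left]
  exact and_congr_right fun _ => ⟨fun h => le_of_mul_le_mul_left h hc,
    fun h => mul_le_mul_of_nonneg_left h hc.le⟩

private lemma touch_B_eq {P Q : Set (E n)} (hP : IsPolytope P) (hQ : IsPolytope Q)
    (hPQ : P ⊆ Q) (u : E n) (ht : (P ∩ faceOf Q u).Nonempty) :
    {x ∈ Q | suppFn P u ≤ ⟪u, x⟫} = faceOf Q u := by
  obtain ⟨x0, hx0P, hx0Q, hx0e⟩ := ht
  have heq : suppFn P u = suppFn Q u :=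
    le_antisymm (suppFn_mono hP hQ hPQ u) (hx0e ▸ inner_le_suppFn hP u hx0P)
  ext x
  simp only [Set.mem_setOf_eq, faceOf, heq]
  exact and_congr_right fun hx =>
    ⟨fun h => le_antisymm (inner_le_suppFn hQ u hx) h, fun h => h.ge⟩

private lemma notouch_span {P Q : Set (E n)} (hP : IsPolytope P) (hQ : IsPolytope Q)
    (hPQ : P ⊆ Q) (u : E n) (ht : ¬(P ∩ faceOf Q u).Nonempty) :
    vectorSpan ℝ {x ∈ Q | suppFn P u ≤ ⟪u, x⟫} = vectorSpan ℝ Q := by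
  have hlt : suppFn P u < suppFn Q u := by
    rcases lt_or_eq_of_le (suppFn_mono hP hQ hPQ u) with h | h
    · exact h
    · exfalso
      obtain ⟨x, hxP, hxe⟩ := exists_face_mem hP u
      exact ht ⟨x, hxP, hPQ hxP, by rw [hxe, h]⟩
  obtain ⟨y, hyQ, hye⟩ := exists_face_mem hQ u
  obtain ⟨z0, hz0Q, hmin⟩ :=
    (polyCompact hQ).exists_isMinOn (polyNonempty hQ) (cont_inner u).continuousOn
  set m := ⟪u, z0⟫ with hm
  set δ := suppFn Q u - suppFn P u with hδdef
  have hδ : 0 < δ := sub_pos.mpr hlt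
  set D := suppFn Q u - m with hDdef
  have hD : 0 ≤ D := sub_nonneg.mpr (hye ▸ hmin hyQ)
  have hden : 0 < D + δ := by linarith
  set ε := δ / (D + δ) with hε
  have hε0 : 0 < ε := div_pos hδ hden
  have hε1 : ε ≤ 1 := by
    rw [hε, div_le_one hden]; linarith
  have key : ∀ z ∈ Q, y + ε • (z - y) ∈ {x ∈ Q | suppFn P u ≤ ⟪u, x⟫} := by
    intro z hz
    constructor
    · have : y + ε • (z - y) = (1 - ε) • y + ε • z := by
        rw [smul_sub]; module
      rw [this]
      exact polyConvex hQ hyQ hz (by linarith) hε0.le (by ring)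
    · have hcalc : ⟪u, y + ε • (z - y)⟫ = suppFn Q u + ε * (⟪u, z⟫ - suppFn Q u) := by
        rw [inner_add_right, real_inner_smul_right, inner_sub_right, hye]
      rw [hcalc]
      have h1 : suppFn Q u - ⟪u, z⟫ ≤ D := by
        have h0 : ⟪u, z0⟫ ≤ ⟪u, z⟫ := hmin hz
        simp only [hDdef]; linarith
      have h2 : ε * D ≤ δ := by
        rw [hε, div_mul_eq_mul_div, div_le_iff₀ hden]
        nlinarith
      nlinarith
  refine le_antisymm (vectorSpan_mono ℝ (Set.sep_subset _ _)) ?_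
  rw [vectorSpan, Submodule.span_le]
  rintro v ⟨z, hz, z', hz', rfl⟩
  beta_reduce
  have hrw : z -ᵥ z' = ε⁻¹ • ((y + ε • (z - y)) -ᵥ (y + ε • (z' - y))) := by
    rw [vsub_eq_sub, vsub_eq_sub]
    rw [show y + ε • (z - y) - (y + ε • (z' - y)) = ε • (z - z') by
      rw [smul_sub, smul_sub, smul_sub]; abel]
    rw [smul_smul, inv_mul_cancel₀ hε0.ne', one_smul]
  rw [hrw]
  exact Submodule.smul_mem _ _ (vsub_mem_vectorSpan ℝ (key z hz) (key z' hz'))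

private lemma bridge (P Q : Fin n → Set (E n)) (hP : ∀ i, IsPolytope (P i))
    (hQ : ∀ i, IsPolytope (Q i)) (hPQ : ∀ i, P i ⊆ Q i) (u : E n) :
    IsEssential (fun i : Fin n => {x ∈ Q i | suppFn (P i) u ≤ ⟪u, x⟫}) ↔
      IsEssential (fun i : Fin n =>
        if (P i ∩ faceOf (Q i) u).Nonempty then faceOf (Q i) u else Q i) := by
  have hBne : ∀ i, ({x ∈ Q i | suppFn (P i) u ≤ ⟪u, x⟫}).Nonempty := fun i => by
    obtain ⟨y, hyQ, hye⟩ := exists_face_mem (hQ i) u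
    exact ⟨y, hyQ, hye ▸ suppFn_mono (hP i) (hQ i) (hPQ i) u⟩
  have hCne : ∀ i,
      (if (P i ∩ faceOf (Q i) u).Nonempty then faceOf (Q i) u else Q i).Nonempty := fun i => by
    by_cases h : (P i ∩ faceOf (Q i) u).Nonempty
    · rw [if_pos h]; exact exists_face_mem (hQ i) u
    · rw [if_neg h]; exact polyNonempty (hQ i)
  have hspan : ∀ i, vectorSpan ℝ {x ∈ Q i | suppFn (P i) u ≤ ⟪u, x⟫}
      = vectorSpan ℝ (if (P i ∩ faceOf (Q i) u).Nonempty then faceOf (Q i) u else Q i) :=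
    fun i => by
      by_cases h : (P i ∩ faceOf (Q i) u).Nonempty
      · rw [if_pos h, touch_B_eq (hP i) (hQ i) (hPQ i) u h]
      · rw [if_neg h, notouch_span (hP i) (hQ i) (hPQ i) u h]
  have hdim : ∀ I : Finset (Fin n),
      setDim (∑ i ∈ I, {x ∈ Q i | suppFn (P i) u ≤ ⟪u, x⟫})
        = setDim (∑ i ∈ I, if (P i ∩ faceOf (Q i) u).Nonempty then faceOf (Q i) u else Q i) :=
    fun I => setDim_eq_of_vectorSpan
      (vectorSpan_sum_eq I _ _ (fun i _ => hBne i) (fun i _ => hCne i) (fun i _ => hspan i))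
  constructor
  · intro h I hI hIn
    rw [← hdim I]
    exact h I hI hIn
  · intro h I hI hIn
    rw [hdim I]
    exact h I hI hIn

end AuxLemmas

/-- Equivalence of the two essentiality conditions in the two criteria for strict
monotonicity: existence of a nonzero `u` with `{B 1 u, …, B n u}` essential is equivalent
to existence of a unit vector `u` such that the collection consisting of `(Q i)^u` for
`i ∈ T u` (the touching indices) and `Q i` for `i ∉ T u` is essential. -/
theorem B_essential_iff_face_essential {n : ℕ} (P Q : Fin n → Set (E n))
    (hP : ∀ i, IsPolytope (P i)) (hQ : ∀ i, IsPolytope (Q i))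
    (hPQ : ∀ i, P i ⊆ Q i) :
    (∃ u : E n, u ≠ 0 ∧
        IsEssential (fun i : Fin n => {x ∈ Q i | suppFn (P i) u ≤ ⟪u, x⟫})) ↔
      (∃ u : E n, ‖u‖ = 1 ∧
        IsEssential (fun i : Fin n =>
          if (P i ∩ faceOf (Q i) u).Nonempty then faceOf (Q i) u else Q i)) := by
  constructor
  · rintro ⟨u, hu, hess⟩
    have hc : (0 : ℝ) < ‖u‖ := norm_pos_iff.mpr hu
    refine ⟨‖u‖⁻¹ • u, ?_, ?_⟩
    · rw [norm_smul, norm_inv, norm_norm, inv_mul_cancel₀ hc.ne']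
    · refine (bridge P Q hP hQ hPQ _).mp ?_
      have heqf : ∀ i : Fin n, {x ∈ Q i | suppFn (P i) (‖u‖⁻¹ • u) ≤ ⟪‖u‖⁻¹ • u, x⟫}
          = {x ∈ Q i | suppFn (P i) u ≤ ⟪u, x⟫} := by
        intro i
        have h := B_smul (P := P i) (Q := Q i) (hP i) (‖u‖⁻¹ • u) hc
        rw [smul_smul, mul_inv_cancel₀ hc.ne', one_smul] at h
        exact h.symm
      have : (fun i : Fin n => {x ∈ Q i | suppFn (P i) (‖u‖⁻¹ • u) ≤ ⟪‖u‖⁻¹ • u, x⟫})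
          = fun i : Fin n => {x ∈ Q i | suppFn (P i) u ≤ ⟪u, x⟫} := funext heqf
      rw [this]
      exact hess
  · rintro ⟨u, hu, hess⟩
    have hu0 : u ≠ 0 := by
      intro h
      rw [h, norm_zero] at hu
      norm_num at hu
    exact ⟨u, hu0, (bridge P Q hP hQ hPQ u).mpr hess⟩

end
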